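/- arXiv:0910.1893 — 3 statements merged into one kernel-verified Lean document; each statement's English description precedes it below -/
import Mathlib

section
/- Let u be a classical solution of the non-local logistic equation with initial data g. Assume that the map t ↦ λ(t) is continuous on [0,∞); that for each t ≥ 0 the function m(t) := ∫_D u(t,x)² dx is finite and m is differentiable with m'(t) = 2∫_D u(t,x)·∂_t u(t,x) dx (differentiation under the integral sign); and that for each t ≥ 0 one has ∫_D u(t,x)·Δu(t,x) dx = −∫_D |∇u(t,x)|² dx (integration by parts, valid because u(t,·) vanishes on ∂D). If ∫_D g(x)² dx = 1, then ∫_D u(t,x)² dx = 1 for every t ≥ 0; that is, the non-local term λ(t) exactly preserves the L² mass of the solution. -/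
open MeasureTheory Real Set

noncomputable section

/-- The Laplacian of `f`, as the sum of the pure second derivatives in the coordinate
directions of `EuclideanSpace ℝ (Fin n)`. -/
def lap {n : ℕ} (f : EuclideanSpace ℝ (Fin n) → ℝ) (x : EuclideanSpace ℝ (Fin n)) : ℝ :=
  ∑ i : Fin n, fderiv ℝ (fun y => fderiv ℝ f y (EuclideanSpace.single i 1)) x
    (EuclideanSpace.single i 1)

/-- The non-local term `λ(t) = ∫_D (|∇u|² + a (u^{p+1} − u²)) dx`. -/
def lam {n : ℕ} (D : Set (EuclideanSpace ℝ (Fin n))) (a : EuclideanSpace ℝ (Fin n) → ℝ)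
    (p : ℝ) (u : ℝ → EuclideanSpace ℝ (Fin n) → ℝ) (t : ℝ) : ℝ :=
  ∫ x in D, (‖gradient (u t) x‖ ^ 2 + a x * ((u t x) ^ (p + 1) - (u t x) ^ 2))

/-- A classical solution of the non-local logistic equation
`∂ₜu = Δu + λ(t)u + a(u − uᵖ)` on `D` with initial data `g`. -/
structure IsClassicalSolution {n : ℕ} (D : Set (EuclideanSpace ℝ (Fin n)))
    (a : EuclideanSpace ℝ (Fin n) → ℝ) (p : ℝ)
    (g : EuclideanSpace ℝ (Fin n) → ℝ) (u : ℝ → EuclideanSpace ℝ (Fin n) → ℝ) : Prop where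
  init : ∀ x ∈ D, u 0 x = g x
  nonneg : ∀ t, 0 ≤ t → ∀ x ∈ D, 0 ≤ u t x
  space_reg : ∀ t, 0 ≤ t → ContDiffOn ℝ 2 (u t) D
  time_diff : ∀ x ∈ D, Differentiable ℝ fun s => u s x
  lam_integrable : ∀ t, 0 ≤ t → IntegrableOn
    (fun x => ‖gradient (u t) x‖ ^ 2 + a x * ((u t x) ^ (p + 1) - (u t x) ^ 2)) D volume
  pde : ∀ t, 0 ≤ t → ∀ x ∈ D,
    deriv (fun s => u s x) t =
      lap (u t) x + lam D a p u t * u t x + a x * (u t x - (u t x) ^ p)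

/-- The non-local term `λ(t)` exactly preserves the `L²` mass:
if `∫_D g² = 1`, then `∫_D u(t)² = 1` for all `t ≥ 0`. -/
theorem mass_preservation {n : ℕ} (hn : 1 ≤ n)
    (D : Set (EuclideanSpace ℝ (Fin n))) (hD_open : IsOpen D)
    (hD_bdd : Bornology.IsBounded D)
    (M p : ℝ) (hM : 0 < M) (hp : 1 < p)
    (a g : EuclideanSpace ℝ (Fin n) → ℝ)
    (ha : ∀ x ∈ D, 0 ≤ a x ∧ a x ≤ M) (ha' : ∀ x ∈ D, ‖gradient a x‖ ≤ M)
    (u : ℝ → EuclideanSpace ℝ (Fin n) → ℝ)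
    (hu : IsClassicalSolution D a p g u)
    -- continuity of `t ↦ λ(t)` on `[0,∞)`
    (hlam_cont : ContinuousOn (lam D a p u) (Set.Ici 0))
    -- `m(t) = ∫_D u(t)²` is finite
    (hm_int : ∀ t, 0 ≤ t → IntegrableOn (fun x => (u t x) ^ 2) D volume)
    -- differentiation under the integral sign: `m'(t) = 2 ∫_D u ∂ₜu`
    (hm_deriv : ∀ t, 0 ≤ t → HasDerivAt (fun s => ∫ x in D, (u s x) ^ 2)
      (2 * ∫ x in D, u t x * deriv (fun s => u s x) t) t)
    -- integration by parts: `∫_D u Δu = −∫_D |∇u|²`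
    (hibp : ∀ t, 0 ≤ t →
      (∫ x in D, u t x * lap (u t) x) = -∫ x in D, ‖gradient (u t) x‖ ^ 2)
    (hg : ∫ x in D, (g x) ^ 2 = 1) :
    ∀ t, 0 ≤ t → ∫ x in D, (u t x) ^ 2 = 1 := by
  -- Abbreviations
  set lmb := lam D a p u with hlmb
  have hDm : MeasurableSet D := hD_open.measurableSet
  -- the key derivative formula: m'(t) = 2 λ(t) (m(t) - 1)
  have hkey : ∀ t, 0 ≤ t → HasDerivAt (fun s => ∫ x in D, (u s x) ^ 2)
      (2 * lmb t * ((∫ x in D, (u t x) ^ 2) - 1)) t := by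
    intro t ht
    have hBint := hu.lam_integrable t ht
    have hu2 := hm_int t ht
    have hf2 : ContDiffOn ℝ 2 (u t) D := hu.space_reg t ht
    have hfd : ContinuousOn (fderiv ℝ (u t)) D :=
      hf2.continuousOn_fderiv_of_isOpen hD_open (by norm_num)
    have hgrad_cont : ContinuousOn (gradient (u t)) D := by
      have : gradient (u t) = fun x =>
          (InnerProductSpace.toDual ℝ (EuclideanSpace ℝ (Fin n))).symm (fderiv ℝ (u t) x) := rfl
      rw [this]
      exact (InnerProductSpace.toDual ℝ
        (EuclideanSpace ℝ (Fin n))).symm.continuous.comp_continuousOn hfd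
    have hG_cont : ContinuousOn (fun x => ‖gradient (u t) x‖ ^ 2) D :=
      (hgrad_cont.norm).pow 2
    -- pointwise: ‖∇u‖² ≤ B + M u²
    have hG_int : IntegrableOn (fun x => ‖gradient (u t) x‖ ^ 2) D volume := by
      apply Integrable.mono' (hBint.add (hu2.const_mul M))
        (hG_cont.aestronglyMeasurable hDm)
      rw [ae_restrict_iff' hDm]
      filter_upwards with x hx
      have h1 := (ha x hx).1
      have h2 := (ha x hx).2
      have h3 := hu.nonneg t ht x hx
      have h4 : (0:ℝ) ≤ u t x ^ (p + 1) := Real.rpow_nonneg h3 _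
      have h5 : (0:ℝ) ≤ u t x ^ 2 := sq_nonneg _
      have h6 : ‖(‖gradient (u t) x‖ ^ 2 : ℝ)‖ = ‖gradient (u t) x‖ ^ 2 :=
        Real.norm_of_nonneg (by positivity)
      simp only [Pi.add_apply]
      rw [h6]
      nlinarith [mul_nonneg h1 h4, mul_le_mul_of_nonneg_right h2 h5]
    have haB_int : IntegrableOn (fun x => a x * ((u t x) ^ (p + 1) - (u t x) ^ 2)) D volume := by
      have : (fun x => a x * ((u t x) ^ (p + 1) - (u t x) ^ 2)) = fun x =>
          (‖gradient (u t) x‖ ^ 2 + a x * ((u t x) ^ (p + 1) - (u t x) ^ 2))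
            - ‖gradient (u t) x‖ ^ 2 := by
        funext x; ring
      rw [this]
      exact hBint.sub hG_int
    -- integrability of u · Δu
    have hulap_int : IntegrableOn (fun x => u t x * lap (u t) x) D volume := by
      by_contra hcon
      have h0 : ∫ x in D, u t x * lap (u t) x = 0 := integral_undef hcon
      have hG0 : ∫ x in D, ‖gradient (u t) x‖ ^ 2 = 0 := by
        have := hibp t ht; linarith
      have hGz : (fun x => ‖gradient (u t) x‖ ^ 2) =ᵐ[volume.restrict D] 0 := by
        exact (integral_eq_zero_iff_of_nonneg (fun x => by positivity) hG_int).mp hG0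
      have hEq : Set.EqOn (fun x => ‖gradient (u t) x‖ ^ 2) (fun _ => (0:ℝ)) D :=
        MeasureTheory.Measure.eqOn_of_ae_eq hGz hG_cont continuousOn_const
          (by rw [hD_open.interior_eq]; exact subset_closure)
      have hfz : ∀ x ∈ D, fderiv ℝ (u t) x = 0 := by
        intro x hx
        have h1 : ‖gradient (u t) x‖ ^ 2 = 0 := hEq hx
        have h2 : gradient (u t) x = 0 := by
          have := pow_eq_zero_iff (n := 2) (by norm_num) |>.mp h1
          exact norm_eq_zero.mp this
        have h3 : (InnerProductSpace.toDual ℝ (EuclideanSpace ℝ (Fin n))).symm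
            (fderiv ℝ (u t) x) = 0 := h2
        calc fderiv ℝ (u t) x
            = (InnerProductSpace.toDual ℝ (EuclideanSpace ℝ (Fin n)))
              ((InnerProductSpace.toDual ℝ (EuclideanSpace ℝ (Fin n))).symm
                (fderiv ℝ (u t) x)) := by
              rw [LinearIsometryEquiv.apply_symm_apply]
          _ = 0 := by rw [h3]; exact map_zero _
      have hlap0 : ∀ x ∈ D, lap (u t) x = 0 := by
        intro x hx
        unfold lap
        apply Finset.sum_eq_zero
        intro i _
        have hev : (fun y => fderiv ℝ (u t) y (EuclideanSpace.single i 1))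
            =ᶠ[nhds x] fun _ => (0:ℝ) := by
          filter_upwards [hD_open.mem_nhds hx] with y hy
          rw [hfz y hy]; rfl
        rw [hev.fderiv_eq, fderiv_fun_const]
        rfl
      exact hcon (((integrableOn_congr_fun
        (fun x hx => by rw [hlap0 x hx, mul_zero]) hDm)).mpr
        (integrableOn_zero))
    -- compute the integral ∫ u ∂ₜu
    have hmkey : (∫ x in D, u t x * deriv (fun s => u s x) t)
        = lmb t * ((∫ x in D, (u t x) ^ 2) - 1) := by
      have keyEq : Set.EqOn (fun x => u t x * deriv (fun s => u s x) t)
          (fun x => u t x * lap (u t) x + (lmb t * (u t x) ^ 2 +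
            (‖gradient (u t) x‖ ^ 2 -
              (‖gradient (u t) x‖ ^ 2 + a x * ((u t x) ^ (p + 1) - (u t x) ^ 2))))) D := by
        intro x hx
        simp only
        rw [hu.pde t ht x hx]
        have hpow : (u t x) ^ (p + 1) = (u t x) ^ p * u t x := by
          rcases eq_or_lt_of_le (hu.nonneg t ht x hx) with h | h
          · rw [← h, Real.zero_rpow (by linarith), Real.zero_rpow (by linarith), zero_mul]
          · rw [Real.rpow_add h, Real.rpow_one]
        rw [hpow]; ring
      rw [setIntegral_congr_fun hDm keyEq]
      have hsub : IntegrableOn (fun x => ‖gradient (u t) x‖ ^ 2 -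
          (‖gradient (u t) x‖ ^ 2 + a x * ((u t x) ^ (p + 1) - (u t x) ^ 2))) D volume :=
        hG_int.sub hBint
      have hmul : IntegrableOn (fun x => lmb t * (u t x) ^ 2) D volume :=
        hu2.const_mul (lmb t)
      have hrest : IntegrableOn (fun x => lmb t * (u t x) ^ 2 +
          (‖gradient (u t) x‖ ^ 2 -
            (‖gradient (u t) x‖ ^ 2 + a x * ((u t x) ^ (p + 1) - (u t x) ^ 2)))) D volume :=
        hmul.add hsub
      rw [integral_add hulap_int hrest, integral_add hmul hsub,
        integral_sub hG_int hBint, hibp t ht, MeasureTheory.integral_const_mul]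
      have hlamval : (∫ x in D, (‖gradient (u t) x‖ ^ 2 +
          a x * ((u t x) ^ (p + 1) - (u t x) ^ 2))) = lmb t := rfl
      rw [hlamval]; ring
    have := hm_deriv t ht
    rw [hmkey] at this
    convert this using 1
    ring
  -- Grönwall argument
  intro t₀ ht₀
  obtain ⟨K, hK⟩ := (isCompact_Icc (a := (0:ℝ)) (b := t₀)).exists_bound_of_continuousOn
    (hlam_cont.mono (Set.Icc_subset_Ici_self))
  have hm0 : (∫ x in D, (u 0 x) ^ 2) = 1 := by
    rw [setIntegral_congr_fun hDm (fun x hx => by rw [hu.init x hx])]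
    exact hg
  have hmono : ∀ s ∈ Set.Icc (0:ℝ) t₀, HasDerivAt (fun r => (∫ x in D, (u r x) ^ 2) - 1)
      (2 * lmb s * ((∫ x in D, (u s x) ^ 2) - 1)) s := fun s hs =>
    (hkey s hs.1).sub_const 1
  have hcont : ContinuousOn (fun r => (∫ x in D, (u r x) ^ 2) - 1) (Set.Icc 0 t₀) :=
    fun s hs => ((hmono s hs).continuousAt).continuousWithinAt
  have hbound : ∀ s ∈ Set.Ico (0:ℝ) t₀,
      ‖2 * lmb s * ((∫ x in D, (u s x) ^ 2) - 1)‖ ≤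
        (2 * K) * ‖(∫ x in D, (u s x) ^ 2) - 1‖ + 0 := by
    intro s hs
    have h1 := hK s ⟨hs.1, le_of_lt hs.2⟩
    rw [norm_mul, norm_mul, add_zero]
    have h2 : ‖(2:ℝ)‖ = 2 := by norm_num
    rw [h2]
    have h3 : (0:ℝ) ≤ ‖(∫ x in D, (u s x) ^ 2) - 1‖ := norm_nonneg _
    nlinarith [norm_nonneg (lmb s)]
  have hg0 : ‖(∫ x in D, (u 0 x) ^ 2) - 1‖ ≤ 0 := by rw [hm0]; simp
  have hGron := norm_le_gronwallBound_of_norm_deriv_right_le hcont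
    (fun s hs => (hmono s ⟨hs.1, le_of_lt hs.2⟩).hasDerivWithinAt) hg0 hbound
    t₀ ⟨ht₀, le_refl t₀⟩
  rw [gronwallBound_ε0_δ0] at hGron
  have := norm_nonneg ((∫ x in D, (u t₀ x) ^ 2) - 1)
  have h5 : ‖(∫ x in D, (u t₀ x) ^ 2) - 1‖ = 0 := le_antisymm hGron this
  have := norm_eq_zero.mp h5
  linarith [sub_eq_zero.mp this]
end
end

section
/- (L² stability, Theorem 1.3 of the paper.) Let u and v be classical solutions of the non-local logistic equation with initial data g_u and g_v respectively, and suppose there is a constant C > 0 such that for all t ≥ 0: 0 ≤ u(t,x) ≤ C and 0 ≤ v(t,x) ≤ C on D, ∫_D u(t,x)² dx ≤ C², ∫_D |∇u(t,x)|² dx ≤ C² and ∫_D |∇v(t,x)|² dx ≤ C², and λ_v(t) ≤ C. Assume in addition that, writing w(t,x) = u(t,x) − v(t,x), the map t ↦ ∫_D w(t,x)² dx is differentiable with derivative 2∫_D w(t,x)·∂_t w(t,x) dx, and that ∫_D w(t,x)·Δw(t,x) dx = −∫_D |∇w(t,x)|² dx for every t ≥ 0 (integration by parts, valid since w(t,·)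 vanishes on ∂D). Then there exists a constant C₁ ≥ 0, depending only on C, M, p and |D|, such that ∫_D (u(t,x) − v(t,x))² dx ≤ (∫_D (g_u(x) − g_v(x))² dx) · exp(C₁·t) for all t ≥ 0. -/
open MeasureTheory Real Set

noncomputable section

namespace L2Aux

variable {n : ℕ}

lemma integrableOn_of_bounded {D : Set (EuclideanSpace ℝ (Fin n))} (hD : MeasurableSet D)
    (hfin : volume D < ⊤) {f : EuclideanSpace ℝ (Fin n) → ℝ} (hf : ContinuousOn f D) {c : ℝ}
    (hc : ∀ x ∈ D, |f x| ≤ c) : IntegrableOn f D := by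
  refine Integrable.mono' (g := fun _ => c) (integrableOn_const hfin.ne)
    (hf.aestronglyMeasurable hD) ?_
  exact (ae_restrict_iff' hD).2 (Filter.Eventually.of_forall fun x hx => by
    simpa [Real.norm_eq_abs] using hc x hx)

lemma eqzero_of_integral_zero {D : Set (EuclideanSpace ℝ (Fin n))} (hD : IsOpen D)
    {f : EuclideanSpace ℝ (Fin n) → ℝ} (hf : ContinuousOn f D) (h0 : ∀ x ∈ D, 0 ≤ f x)
    (hint : IntegrableOn f D) (hI : (∫ x in D, f x) = 0) : ∀ x ∈ D, f x = 0 := by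
  have hae : f =ᵐ[volume.restrict D] 0 := by
    refine (integral_eq_zero_iff_of_nonneg_ae ?_ hint).1 hI
    exact (ae_restrict_iff' hD.measurableSet).2
      (Filter.Eventually.of_forall fun x hx => h0 x hx)
  by_contra hcon
  push_neg at hcon
  obtain ⟨x0, hx0D, hx0⟩ := hcon
  have hopen : IsOpen (D ∩ f ⁻¹' {(0:ℝ)}ᶜ) :=
    hf.isOpen_inter_preimage hD isOpen_compl_singleton
  have hpos : 0 < volume (D ∩ f ⁻¹' {(0:ℝ)}ᶜ) :=
    hopen.measure_pos volume ⟨x0, hx0D, by simpa using hx0⟩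
  have hnull : volume.restrict D {x | f x ≠ 0} = 0 := ae_iff.1 hae
  rw [Measure.restrict_apply' hD.measurableSet] at hnull
  have hsub : D ∩ f ⁻¹' {(0:ℝ)}ᶜ ⊆ {x | f x ≠ 0} ∩ D := by
    intro x hx; exact ⟨by simpa using hx.2, hx.1⟩
  exact absurd (measure_mono_null hsub hnull) hpos.ne'

lemma rpow_abs_sub_le {q Cb x y : ℝ} (hq : 1 ≤ q) (hx : 0 ≤ x) (hxC : x ≤ Cb)
    (hy : 0 ≤ y) (hyC : y ≤ Cb) : |x ^ q - y ^ q| ≤ q * Cb ^ (q - 1) * |x - y| := by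
  have hq0 : (0:ℝ) ≤ q := by linarith
  have key : ∀ z w : ℝ, 0 ≤ w → w ≤ z → z ≤ Cb →
      z ^ q - w ^ q ≤ q * Cb ^ (q - 1) * (z - w) := by
    intro z w hw hwz hzC
    rcases eq_or_lt_of_le hwz with h | h
    · rw [h]; simp
    · obtain ⟨c, hc, hceq⟩ := exists_hasDerivAt_eq_slope (fun r => r ^ q)
        (fun r => q * r ^ (q - 1)) h
        (fun r _ => (Real.hasDerivAt_rpow_const (Or.inr hq)).continuousAt.continuousWithinAt)
        (fun r _ => Real.hasDerivAt_rpow_const (Or.inr hq))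
      have hc0 : 0 ≤ c := le_trans hw hc.1.le
      have hcC : c ≤ Cb := le_trans hc.2.le hzC
      have hpow : c ^ (q - 1) ≤ Cb ^ (q - 1) :=
        Real.rpow_le_rpow hc0 hcC (by linarith)
      have heq : z ^ q - w ^ q = q * c ^ (q - 1) * (z - w) := by
        have hzw : z - w ≠ 0 := by linarith
        field_simp at hceq
        linarith [hceq]
      rw [heq]
      exact mul_le_mul_of_nonneg_right (mul_le_mul_of_nonneg_left hpow hq0) (by linarith)
  rcases le_total y x with hle | hle
  · have h1 : y ^ q ≤ x ^ q := Real.rpow_le_rpow hy hle hq0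
    rw [abs_of_nonneg (by linarith), abs_of_nonneg (by linarith)]
    exact key x y hy hle hxC
  · have h1 : x ^ q ≤ y ^ q := Real.rpow_le_rpow hx hle hq0
    rw [abs_of_nonpos (by linarith), abs_of_nonpos (by linarith)]
    have := key y x hx hle hyC
    linarith

lemma fderiv_eq_toDual_gradient (f : EuclideanSpace ℝ (Fin n) → ℝ) (x : EuclideanSpace ℝ (Fin n)) :
    fderiv ℝ f x = InnerProductSpace.toDual ℝ _ (gradient f x) := by
  unfold gradient
  simp

lemma gradient_sub' {f g : EuclideanSpace ℝ (Fin n) → ℝ} {x : EuclideanSpace ℝ (Fin n)}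
    (hf : DifferentiableAt ℝ f x) (hg : DifferentiableAt ℝ g x) :
    gradient (fun y => f y - g y) x = gradient f x - gradient g x := by
  unfold gradient
  rw [fderiv_fun_sub hf hg, map_sub]

lemma gradient_continuousOn {D : Set (EuclideanSpace ℝ (Fin n))} (hD : IsOpen D)
    {f : EuclideanSpace ℝ (Fin n) → ℝ} (hf : ContDiffOn ℝ 2 f D) :
    ContinuousOn (fun x => gradient f x) D := by
  have h := hf.continuousOn_fderiv_of_isOpen hD (by norm_num)
  exact (InnerProductSpace.toDual ℝ _).symm.continuous.comp_continuousOn h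

lemma lap_sub {D : Set (EuclideanSpace ℝ (Fin n))} (hD : IsOpen D)
    {f g : EuclideanSpace ℝ (Fin n) → ℝ}
    (hf : ContDiffOn ℝ 2 f D) (hg : ContDiffOn ℝ 2 g D) {x : EuclideanSpace ℝ (Fin n)}
    (hx : x ∈ D) : lap (fun y => f y - g y) x = lap f x - lap g x := by
  unfold lap
  rw [← Finset.sum_sub_distrib]
  refine Finset.sum_congr rfl fun i _ => ?_
  have hfd : ∀ y ∈ D, DifferentiableAt ℝ f y := fun y hy =>
    (hf.contDiffAt (hD.mem_nhds hy)).differentiableAt (by norm_num)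
  have hgd : ∀ y ∈ D, DifferentiableAt ℝ g y := fun y hy =>
    (hg.contDiffAt (hD.mem_nhds hy)).differentiableAt (by norm_num)
  have h1 : (fun y => fderiv ℝ (fun z => f z - g z) y (EuclideanSpace.single i 1)) =ᶠ[nhds x]
      (fun y => fderiv ℝ f y (EuclideanSpace.single i 1)
        - fderiv ℝ g y (EuclideanSpace.single i 1)) := by
    filter_upwards [hD.mem_nhds hx] with y hy
    rw [fderiv_fun_sub (hfd y hy) (hgd y hy)]
    rfl
  rw [h1.fderiv_eq]
  have hdf : DifferentiableAt ℝ (fun y => fderiv ℝ f y (EuclideanSpace.single i 1)) x := by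
    have h2 : ContDiffAt ℝ 1 (fderiv ℝ f) x :=
      (hf.contDiffAt (hD.mem_nhds hx)).fderiv_right (by norm_num)
    exact ((ContinuousLinearMap.apply ℝ ℝ (EuclideanSpace.single i 1)).differentiableAt).comp x
      (h2.differentiableAt one_ne_zero)
  have hdg : DifferentiableAt ℝ (fun y => fderiv ℝ g y (EuclideanSpace.single i 1)) x := by
    have h2 : ContDiffAt ℝ 1 (fderiv ℝ g) x :=
      (hg.contDiffAt (hD.mem_nhds hx)).fderiv_right (by norm_num)
    exact ((ContinuousLinearMap.apply ℝ ℝ (EuclideanSpace.single i 1)).differentiableAt).comp x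
      (h2.differentiableAt one_ne_zero)
  rw [fderiv_fun_sub hdf hdg]
  rfl

end L2Aux

set_option maxHeartbeats 4000000 in
/-- L² stability, Theorem 1.3 of the paper. -/
theorem l2_stability {n : ℕ} (hn : 1 ≤ n)
    (D : Set (EuclideanSpace ℝ (Fin n))) (hD_open : IsOpen D)
    (hD_bdd : Bornology.IsBounded D)
    (M p : ℝ) (hM : 0 < M) (hp : 1 < p)
    (a gu gv : EuclideanSpace ℝ (Fin n) → ℝ)
    (ha : ∀ x ∈ D, 0 ≤ a x ∧ a x ≤ M) (ha' : ∀ x ∈ D, ‖gradient a x‖ ≤ M)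
    (u v : ℝ → EuclideanSpace ℝ (Fin n) → ℝ)
    (hu : IsClassicalSolution D a p gu u) (hv : IsClassicalSolution D a p gv v)
    (C : ℝ) (hC : 0 < C)
    (hu_bd : ∀ t, 0 ≤ t → ∀ x ∈ D, u t x ≤ C)
    (hv_bd : ∀ t, 0 ≤ t → ∀ x ∈ D, v t x ≤ C)
    (hu_l2 : ∀ t, 0 ≤ t → (∫ x in D, (u t x) ^ 2) ≤ C ^ 2)
    (hu_h1 : ∀ t, 0 ≤ t → (∫ x in D, ‖gradient (u t) x‖ ^ 2) ≤ C ^ 2)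
    (hv_h1 : ∀ t, 0 ≤ t → (∫ x in D, ‖gradient (v t) x‖ ^ 2) ≤ C ^ 2)
    (hlam_v : ∀ t, 0 ≤ t → lam D a p v t ≤ C)
    -- differentiation under the integral sign for `w = u − v`
    (hw_deriv : ∀ t, 0 ≤ t → HasDerivAt (fun s => ∫ x in D, (u s x - v s x) ^ 2)
      (2 * ∫ x in D, (u t x - v t x) *
        (deriv (fun s => u s x) t - deriv (fun s => v s x) t)) t)
    -- integration by parts: `∫_D w Δw = −∫_D |∇w|²`
    (hw_ibp : ∀ t, 0 ≤ t →
      (∫ x in D, (u t x - v t x) * lap (fun y => u t y - v t y) x)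
        = -∫ x in D, ‖gradient (fun y => u t y - v t y) x‖ ^ 2) :
    ∃ C₁, 0 ≤ C₁ ∧ ∀ t, 0 ≤ t →
      (∫ x in D, (u t x - v t x) ^ 2) ≤
        (∫ x in D, (gu x - gv x) ^ 2) * Real.exp (C₁ * t) := by
  classical
  have hD_meas : MeasurableSet D := hD_open.measurableSet
  have hfin : volume D < ⊤ := hD_bdd.measure_lt_top
  set m : ℝ := (volume D).toReal with hm_def
  have hm0 : 0 ≤ m := ENNReal.toReal_nonneg
  have hp0 : (0:ℝ) < p := by linarith
  have hCp1 : (0:ℝ) ≤ C ^ (p + 1) := Real.rpow_nonneg hC.le _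
  have hCp : (0:ℝ) ≤ C ^ p := Real.rpow_nonneg hC.le _
  have hCpm1 : (0:ℝ) ≤ C ^ (p - 1) := Real.rpow_nonneg hC.le _
  set Λ : ℝ := C ^ 2 + M * C ^ (p + 1) * m with hΛ_def
  set K₂ : ℝ := M * (1 + p * C ^ (p - 1)) with hK2_def
  set K₃ : ℝ := M * ((p + 1) * C ^ p + 2 * C) with hK3_def
  set K : ℝ := Λ + K₂ + (2 * C ^ 4 + K₃ * C) * m with hK_def
  have hΛ0 : 0 ≤ Λ := by
    rw [hΛ_def]
    have h1 : (0:ℝ) ≤ C ^ 2 := sq_nonneg C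
    have h2 : 0 ≤ M * C ^ (p + 1) * m := by positivity
    linarith
  have hK20 : 0 ≤ K₂ := by
    rw [hK2_def]
    have h1 : (0:ℝ) ≤ p * C ^ (p - 1) := by positivity
    have h2 : (0:ℝ) ≤ 1 + p * C ^ (p - 1) := by linarith only [h1]
    exact mul_nonneg hM.le h2
  have hK30 : 0 ≤ K₃ := by
    rw [hK3_def]
    have h1 : (0:ℝ) ≤ (p + 1) * C ^ p := by positivity
    have h2 : (0:ℝ) ≤ 2 * C := by linarith only [hC]
    exact mul_nonneg hM.le (by linarith only [h1, h2])
  have hK0 : 0 ≤ K := by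
    rw [hK_def]
    have h1 : (0:ℝ) ≤ (2 * C ^ 4 + K₃ * C) * m := by positivity
    linarith
  -- The key differential inequality
  have key : ∀ t, 0 ≤ t →
      2 * (∫ x in D, (u t x - v t x) *
        (deriv (fun s => u s x) t - deriv (fun s => v s x) t)) ≤
      2 * K * ∫ x in D, (u t x - v t x) ^ 2 := by
    intro t ht
    have hW0' : 0 ≤ ∫ x in D, (u t x - v t x) ^ 2 :=
      setIntegral_nonneg hD_meas fun x _ => sq_nonneg _
    rcases eq_or_lt_of_le (by simp : (0:ENNReal) ≤ volume D) with hvol0 | hvolpos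
    · have hrest : volume.restrict D = 0 := Measure.restrict_eq_zero.2 hvol0.symm
      rw [hrest]
      simp
    have hmpos : 0 < m := ENNReal.toReal_pos hvolpos.ne' hfin.ne
    -- basic regularity and bounds
    have hU := hu.space_reg t ht
    have hV := hv.space_reg t ht
    have hUc : ContinuousOn (u t) D := hU.continuousOn
    have hVc : ContinuousOn (v t) D := hV.continuousOn
    have hwc : ContinuousOn (fun x => u t x - v t x) D := hUc.sub hVc
    have hU0 := hu.nonneg t ht
    have hV0 := hv.nonneg t ht
    have hUC := hu_bd t ht
    have hVC := hv_bd t ht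
    have hwbd : ∀ x ∈ D, |u t x - v t x| ≤ C := fun x hx =>
      abs_le.2 ⟨by linarith only [hU0 x hx, hVC x hx],
        by linarith only [hUC x hx, hV0 x hx]⟩
    -- integrability of basic bounded functions
    have int_w2 : IntegrableOn (fun x => (u t x - v t x) ^ 2) D := by
      refine L2Aux.integrableOn_of_bounded hD_meas hfin (hwc.pow 2) (c := C ^ 2)
        fun x hx => ?_
      show |(u t x - v t x) ^ 2| ≤ C ^ 2
      rw [abs_of_nonneg (sq_nonneg _), ← sq_abs]
      exact pow_le_pow_left₀ (abs_nonneg _) (hwbd x hx) 2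
    have int_absw : IntegrableOn (fun x => |u t x - v t x|) D := by
      refine L2Aux.integrableOn_of_bounded hD_meas hfin hwc.abs (c := C) fun x hx => ?_
      show |(|u t x - v t x|)| ≤ C
      rw [abs_abs]; exact hwbd x hx
    have int_wU : IntegrableOn (fun x => (u t x - v t x) * u t x) D := by
      refine L2Aux.integrableOn_of_bounded hD_meas hfin (hwc.mul hUc) (c := C * C)
        fun x hx => ?_
      show |(u t x - v t x) * u t x| ≤ C * C
      rw [abs_mul]
      exact mul_le_mul (hwbd x hx) (by rw [abs_of_nonneg (hU0 x hx)]; exact hUC x hx)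
        (abs_nonneg _) hC.le
    have int_wV : IntegrableOn (fun x => (u t x - v t x) * v t x) D := by
      refine L2Aux.integrableOn_of_bounded hD_meas hfin (hwc.mul hVc) (c := C * C)
        fun x hx => ?_
      show |(u t x - v t x) * v t x| ≤ C * C
      rw [abs_mul]
      exact mul_le_mul (hwbd x hx) (by rw [abs_of_nonneg (hV0 x hx)]; exact hVC x hx)
        (abs_nonneg _) hC.le
    -- gradient continuity
    have hgUc : ContinuousOn (fun x => gradient (u t) x) D :=
      L2Aux.gradient_continuousOn hD_open hU
    have hgVc : ContinuousOn (fun x => gradient (v t) x) D :=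
      L2Aux.gradient_continuousOn hD_open hV
    -- integrability of a-terms and of |∇u|², |∇v|²
    have int_Fu := hu.lam_integrable t ht
    have int_Fv := hv.lam_integrable t ht
    have hAu_meas : AEStronglyMeasurable
        (fun x => a x * ((u t x) ^ (p + 1) - (u t x) ^ 2)) (volume.restrict D) := by
      have h2 : AEStronglyMeasurable (fun x => ‖gradient (u t) x‖ ^ 2) (volume.restrict D) :=
        ((hgUc.norm).pow 2).aestronglyMeasurable hD_meas
      exact (int_Fu.aestronglyMeasurable.sub h2).congr
        (Filter.Eventually.of_forall fun x => by simp only [Pi.sub_apply]; ring)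
    have hAv_meas : AEStronglyMeasurable
        (fun x => a x * ((v t x) ^ (p + 1) - (v t x) ^ 2)) (volume.restrict D) := by
      have h2 : AEStronglyMeasurable (fun x => ‖gradient (v t) x‖ ^ 2) (volume.restrict D) :=
        ((hgVc.norm).pow 2).aestronglyMeasurable hD_meas
      exact (int_Fv.aestronglyMeasurable.sub h2).congr
        (Filter.Eventually.of_forall fun x => by simp only [Pi.sub_apply]; ring)
    have hApt : ∀ (f : ℝ → EuclideanSpace ℝ (Fin n) → ℝ),
        (∀ x ∈ D, 0 ≤ f t x) → (∀ x ∈ D, f t x ≤ C) → ∀ x ∈ D,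
        ‖a x * ((f t x) ^ (p + 1) - (f t x) ^ 2)‖ ≤ M * (C ^ (p + 1) + C ^ 2) := by
      intro f h0 hCb x hx
      have h1 : 0 ≤ f t x := h0 x hx
      have hup : (f t x) ^ (p + 1) ≤ C ^ (p + 1) :=
        Real.rpow_le_rpow h1 (hCb x hx) (by linarith only [hp0])
      have hup0 : 0 ≤ (f t x) ^ (p + 1) := Real.rpow_nonneg h1 _
      have h2 : (f t x) ^ 2 ≤ C ^ 2 := pow_le_pow_left₀ h1 (hCb x hx) 2
      have h3 : 0 ≤ (f t x) ^ 2 := sq_nonneg _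
      rw [Real.norm_eq_abs, abs_mul, abs_of_nonneg (ha x hx).1]
      have habs : |(f t x) ^ (p + 1) - (f t x) ^ 2| ≤ C ^ (p + 1) + C ^ 2 := by
        rw [abs_le]
        constructor
        · linarith only [hup, hup0, h2, h3]
        · linarith only [hup, hup0, h2, h3]
      exact mul_le_mul (ha x hx).2 habs (abs_nonneg _) hM.le
    have int_Au : IntegrableOn (fun x => a x * ((u t x) ^ (p + 1) - (u t x) ^ 2)) D := by
      refine Integrable.mono' (g := fun _ => M * (C ^ (p + 1) + C ^ 2))
        (integrableOn_const hfin.ne) hAu_meas ?_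
      exact (ae_restrict_iff' hD_meas).2 (Filter.Eventually.of_forall fun x hx =>
        hApt u hU0 hUC x hx)
    have int_Av : IntegrableOn (fun x => a x * ((v t x) ^ (p + 1) - (v t x) ^ 2)) D := by
      refine Integrable.mono' (g := fun _ => M * (C ^ (p + 1) + C ^ 2))
        (integrableOn_const hfin.ne) hAv_meas ?_
      exact (ae_restrict_iff' hD_meas).2 (Filter.Eventually.of_forall fun x hx =>
        hApt v hV0 hVC x hx)
    have int_gu2 : IntegrableOn (fun x => ‖gradient (u t) x‖ ^ 2) D :=
      (int_Fu.sub int_Au).congr (Filter.Eventually.of_forall fun x => by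
        simp only [Pi.sub_apply]; ring)
    have int_gv2 : IntegrableOn (fun x => ‖gradient (v t) x‖ ^ 2) D :=
      (int_Fv.sub int_Av).congr (Filter.Eventually.of_forall fun x => by
        simp only [Pi.sub_apply]; ring)
    -- integrability of |∇u ± ∇v|²
    have int_dom : IntegrableOn
        (fun x => 2 * ‖gradient (u t) x‖ ^ 2 + 2 * ‖gradient (v t) x‖ ^ 2) D :=
      (int_gu2.const_mul 2).add (int_gv2.const_mul 2)
    have int_gd2 : IntegrableOn (fun x => ‖gradient (u t) x - gradient (v t) x‖ ^ 2) D := by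
      refine Integrable.mono' int_dom
        (((hgUc.sub hgVc).norm.pow 2).aestronglyMeasurable hD_meas) ?_
      refine Filter.Eventually.of_forall fun x => ?_
      show ‖‖gradient (u t) x - gradient (v t) x‖ ^ 2‖
        ≤ 2 * ‖gradient (u t) x‖ ^ 2 + 2 * ‖gradient (v t) x‖ ^ 2
      rw [Real.norm_eq_abs, abs_of_nonneg (sq_nonneg _)]
      have h1 := norm_sub_le (gradient (u t) x) (gradient (v t) x)
      have h2 : ‖gradient (u t) x - gradient (v t) x‖ ^ 2
          ≤ (‖gradient (u t) x‖ + ‖gradient (v t) x‖) ^ 2 :=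
        pow_le_pow_left₀ (norm_nonneg _) h1 2
      have h3 := sq_nonneg (‖gradient (u t) x‖ - ‖gradient (v t) x‖)
      linarith only [h2, h3]
    have int_gs2 : IntegrableOn (fun x => ‖gradient (u t) x + gradient (v t) x‖ ^ 2) D := by
      refine Integrable.mono' int_dom
        (((hgUc.add hgVc).norm.pow 2).aestronglyMeasurable hD_meas) ?_
      refine Filter.Eventually.of_forall fun x => ?_
      show ‖‖gradient (u t) x + gradient (v t) x‖ ^ 2‖
        ≤ 2 * ‖gradient (u t) x‖ ^ 2 + 2 * ‖gradient (v t) x‖ ^ 2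
      rw [Real.norm_eq_abs, abs_of_nonneg (sq_nonneg _)]
      have h1 := norm_add_le (gradient (u t) x) (gradient (v t) x)
      have h2 : ‖gradient (u t) x + gradient (v t) x‖ ^ 2
          ≤ (‖gradient (u t) x‖ + ‖gradient (v t) x‖) ^ 2 :=
        pow_le_pow_left₀ (norm_nonneg _) h1 2
      have h3 := sq_nonneg (‖gradient (u t) x‖ - ‖gradient (v t) x‖)
      linarith only [h2, h3]
    -- gradient of the difference
    have hUd : ∀ x ∈ D, DifferentiableAt ℝ (u t) x := fun x hx =>
      (hU.contDiffAt (hD_open.mem_nhds hx)).differentiableAt (by norm_num)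
    have hVd : ∀ x ∈ D, DifferentiableAt ℝ (v t) x := fun x hx =>
      (hV.contDiffAt (hD_open.mem_nhds hx)).differentiableAt (by norm_num)
    have hgrad_eq : ∀ x ∈ D, gradient (fun y => u t y - v t y) x
        = gradient (u t) x - gradient (v t) x :=
      fun x hx => L2Aux.gradient_sub' (hUd x hx) (hVd x hx)
    have hN_eq : (∫ x in D, ‖gradient (fun y => u t y - v t y) x‖ ^ 2)
        = ∫ x in D, ‖gradient (u t) x - gradient (v t) x‖ ^ 2 :=
      setIntegral_congr_fun hD_meas fun x hx => by
        show ‖gradient (fun y => u t y - v t y) x‖ ^ 2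
          = ‖gradient (u t) x - gradient (v t) x‖ ^ 2
        rw [hgrad_eq x hx]
    have hN0 : 0 ≤ ∫ x in D, ‖gradient (u t) x - gradient (v t) x‖ ^ 2 :=
      setIntegral_nonneg hD_meas fun x _ => sq_nonneg _
    -- w·Δw is integrable on D
    have int_wL : IntegrableOn
        (fun x => (u t x - v t x) * lap (fun y => u t y - v t y) x) D := by
      by_contra hcon
      have h0 : (∫ x in D, (u t x - v t x) * lap (fun y => u t y - v t y) x) = 0 :=
        integral_undef hcon
      have hNz : (∫ x in D, ‖gradient (u t) x - gradient (v t) x‖ ^ 2) = 0 := by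
        have h1 := hw_ibp t ht
        rw [h0, hN_eq] at h1
        linarith only [h1]
      have hz : ∀ x ∈ D, ‖gradient (u t) x - gradient (v t) x‖ ^ 2 = 0 :=
        L2Aux.eqzero_of_integral_zero hD_open ((hgUc.sub hgVc).norm.pow 2)
          (fun x _ => sq_nonneg _) int_gd2 hNz
      have hfz : ∀ x ∈ D, fderiv ℝ (fun y => u t y - v t y) x = 0 := by
        intro x hx
        have h1 : gradient (fun y => u t y - v t y) x = 0 := by
          rw [hgrad_eq x hx]
          exact norm_eq_zero.1 (pow_eq_zero_iff (by norm_num : (2:ℕ) ≠ 0) |>.1 (hz x hx))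
        rw [L2Aux.fderiv_eq_toDual_gradient, h1, map_zero]
      have hlapz : ∀ x ∈ D, lap (fun y => u t y - v t y) x = 0 := by
        intro x hx
        unfold lap
        refine Finset.sum_eq_zero fun i _ => ?_
        have hev : (fun y => fderiv ℝ (fun z => u t z - v t z) y (EuclideanSpace.single i 1))
            =ᶠ[nhds x] (fun _ => (0:ℝ)) := by
          filter_upwards [hD_open.mem_nhds hx] with y hy
          rw [hfz y hy]
          simp
        rw [hev.fderiv_eq]
        simp
      refine hcon (IntegrableOn.congr_fun (integrableOn_zero) (fun x hx => ?_) hD_meas)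
      show (0:ℝ) = (u t x - v t x) * lap (fun y => u t y - v t y) x
      rw [hlapz x hx, mul_zero]
    -- main case split on integrability of the full integrand
    by_cases hint : IntegrableOn (fun x => (u t x - v t x) *
        (deriv (fun s => u s x) t - deriv (fun s => v s x) t)) D
    swap
    · rw [integral_undef hint]
      have h1 : 0 ≤ 2 * K * ∫ x in D, (u t x - v t x) ^ 2 := by positivity
      linarith only [h1]
    -- split on W = 0
    rcases hW0'.lt_or_eq with hWpos | hWzero
    swap
    · -- W = 0 : w = 0 a.e., so the integral is 0
      have h2 : (fun x => (u t x - v t x) ^ 2) =ᵐ[volume.restrict D] 0 :=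
        (integral_eq_zero_iff_of_nonneg_ae
          (Filter.Eventually.of_forall fun x => sq_nonneg _) int_w2).1 hWzero.symm
      have hae : ∀ᵐ x ∂(volume.restrict D), u t x - v t x = 0 := by
        filter_upwards [h2] with x hx
        exact pow_eq_zero_iff (by norm_num : (2:ℕ) ≠ 0) |>.1 hx
      have hz : (∫ x in D, (u t x - v t x) *
          (deriv (fun s => u s x) t - deriv (fun s => v s x) t)) = 0 := by
        rw [integral_congr_ae (g := fun _ => (0:ℝ))
          (by filter_upwards [hae] with x hx
              show (u t x - v t x) * (deriv (fun s => u s x) t - deriv (fun s => v s x) t) = 0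
              rw [hx, zero_mul])]
        simp
      rw [hz, ← hWzero]
      simp
    -- now: positive measure, positive W, integrable integrand
    -- decomposition of the integrand on D
    have hlapUV : ∀ x ∈ D, lap (fun y => u t y - v t y) x = lap (u t) x - lap (v t) x :=
      fun x hx => L2Aux.lap_sub hD_open hU hV hx
    have hdecomp : ∀ x ∈ D, (u t x - v t x) *
        (deriv (fun s => u s x) t - deriv (fun s => v s x) t)
        = (u t x - v t x) * lap (fun y => u t y - v t y) x +
          (lam D a p u t * ((u t x - v t x) * u t x)
            - lam D a p v t * ((u t x - v t x) * v t x)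
            + a x * ((u t x - v t x) * ((u t x - v t x) - ((u t x) ^ p - (v t x) ^ p)))) := by
      intro x hx
      rw [hu.pde t ht x hx, hv.pde t ht x hx, hlapUV x hx]
      ring
    have int_lam_parts : IntegrableOn (fun x => lam D a p u t * ((u t x - v t x) * u t x)
        - lam D a p v t * ((u t x - v t x) * v t x)) D :=
      (int_wU.const_mul _).sub (int_wV.const_mul _)
    have int_lhsD : IntegrableOn (fun x => (u t x - v t x) * lap (fun y => u t y - v t y) x +
        (lam D a p u t * ((u t x - v t x) * u t x)
          - lam D a p v t * ((u t x - v t x) * v t x)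
          + a x * ((u t x - v t x) * ((u t x - v t x) - ((u t x) ^ p - (v t x) ^ p))))) D :=
      hint.congr_fun (fun x hx => hdecomp x hx) hD_meas
    have int_R : IntegrableOn (fun x => lam D a p u t * ((u t x - v t x) * u t x)
        - lam D a p v t * ((u t x - v t x) * v t x)
        + a x * ((u t x - v t x) * ((u t x - v t x) - ((u t x) ^ p - (v t x) ^ p)))) D :=
      (int_lhsD.sub int_wL).congr (Filter.Eventually.of_forall fun x => by
        simp only [Pi.sub_apply]; ring)
    have int_aPart : IntegrableOn (fun x => a x * ((u t x - v t x) *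
        ((u t x - v t x) - ((u t x) ^ p - (v t x) ^ p)))) D :=
      (int_R.sub int_lam_parts).congr (Filter.Eventually.of_forall fun x => by
        simp only [Pi.sub_apply]; ring)
    -- the integral identity
    have hibp : (∫ x in D, (u t x - v t x) * lap (fun y => u t y - v t y) x)
        = -(∫ x in D, ‖gradient (u t) x - gradient (v t) x‖ ^ 2) := by
      rw [hw_ibp t ht, hN_eq]
    have e1 : (∫ x in D, ((u t x - v t x) * lap (fun y => u t y - v t y) x +
          (lam D a p u t * ((u t x - v t x) * u t x)
            - lam D a p v t * ((u t x - v t x) * v t x)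
            + a x * ((u t x - v t x) * ((u t x - v t x) - ((u t x) ^ p - (v t x) ^ p))))))
        = (∫ x in D, (u t x - v t x) * lap (fun y => u t y - v t y) x)
          + ∫ x in D, (lam D a p u t * ((u t x - v t x) * u t x)
            - lam D a p v t * ((u t x - v t x) * v t x)
            + a x * ((u t x - v t x) * ((u t x - v t x) - ((u t x) ^ p - (v t x) ^ p)))) :=
      integral_add int_wL int_R
    have e2 : (∫ x in D, (lam D a p u t * ((u t x - v t x) * u t x)
            - lam D a p v t * ((u t x - v t x) * v t x)
            + a x * ((u t x - v t x) * ((u t x - v t x) - ((u t x) ^ p - (v t x) ^ p)))))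
        = (∫ x in D, (lam D a p u t * ((u t x - v t x) * u t x)
            - lam D a p v t * ((u t x - v t x) * v t x)))
          + ∫ x in D, a x * ((u t x - v t x) *
              ((u t x - v t x) - ((u t x) ^ p - (v t x) ^ p))) :=
      integral_add int_lam_parts int_aPart
    have e3 : (∫ x in D, (lam D a p u t * ((u t x - v t x) * u t x)
          - lam D a p v t * ((u t x - v t x) * v t x)))
        = (∫ x in D, lam D a p u t * ((u t x - v t x) * u t x))
          - ∫ x in D, lam D a p v t * ((u t x - v t x) * v t x) :=
      integral_sub (int_wU.const_mul _) (int_wV.const_mul _)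
    have e4 : (∫ x in D, lam D a p u t * ((u t x - v t x) * u t x))
        = lam D a p u t * ∫ x in D, (u t x - v t x) * u t x :=
      integral_const_mul _ _
    have e5 : (∫ x in D, lam D a p v t * ((u t x - v t x) * v t x))
        = lam D a p v t * ∫ x in D, (u t x - v t x) * v t x :=
      integral_const_mul _ _
    have he : (∫ x in D, (u t x - v t x) *
        (deriv (fun s => u s x) t - deriv (fun s => v s x) t))
        = -(∫ x in D, ‖gradient (u t) x - gradient (v t) x‖ ^ 2)
          + (lam D a p u t * (∫ x in D, (u t x - v t x) * u t x)
            - lam D a p v t * (∫ x in D, (u t x - v t x) * v t x)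
            + ∫ x in D, a x * ((u t x - v t x) *
              ((u t x - v t x) - ((u t x) ^ p - (v t x) ^ p)))) := by
      rw [setIntegral_congr_fun hD_meas (fun x hx => hdecomp x hx), e1, e2, e3, e4, e5,
        hibp]
    -- ∫ w u - ∫ w v = W
    have hWsplit0 : (∫ x in D, ((u t x - v t x) * u t x - (u t x - v t x) * v t x))
        = (∫ x in D, (u t x - v t x) * u t x) - ∫ x in D, (u t x - v t x) * v t x :=
      integral_sub int_wU int_wV
    have hWsplit : (∫ x in D, (u t x - v t x) * u t x)
        - (∫ x in D, (u t x - v t x) * v t x) = ∫ x in D, (u t x - v t x) ^ 2 := by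
      rw [← hWsplit0]
      refine setIntegral_congr_fun hD_meas fun x hx => ?_
      show (u t x - v t x) * u t x - (u t x - v t x) * v t x = (u t x - v t x) ^ 2
      ring
    -- bound on λ_u
    have hlam_split_u : lam D a p u t = (∫ x in D, ‖gradient (u t) x‖ ^ 2)
        + ∫ x in D, a x * ((u t x) ^ (p + 1) - (u t x) ^ 2) := by
      unfold lam
      exact integral_add int_gu2 int_Au
    have hlam_split_v : lam D a p v t = (∫ x in D, ‖gradient (v t) x‖ ^ 2)
        + ∫ x in D, a x * ((v t x) ^ (p + 1) - (v t x) ^ 2) := by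
      unfold lam
      exact integral_add int_gv2 int_Av
    have hAu_bd : (∫ x in D, a x * ((u t x) ^ (p + 1) - (u t x) ^ 2))
        ≤ M * C ^ (p + 1) * m := by
      have h1 : (∫ x in D, a x * ((u t x) ^ (p + 1) - (u t x) ^ 2))
          ≤ ∫ _x in D, M * C ^ (p + 1) := by
        refine setIntegral_mono_on int_Au (integrableOn_const hfin.ne) hD_meas
          fun x hx => ?_
        show a x * ((u t x) ^ (p + 1) - (u t x) ^ 2) ≤ M * C ^ (p + 1)
        have h2 : a x * ((u t x) ^ (p + 1) - (u t x) ^ 2) ≤ a x * (u t x) ^ (p + 1) :=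
          mul_le_mul_of_nonneg_left (by linarith only [sq_nonneg (u t x)]) (ha x hx).1
        have h3 : (u t x) ^ (p + 1) ≤ C ^ (p + 1) :=
          Real.rpow_le_rpow (hU0 x hx) (hUC x hx) (by linarith only [hp0])
        have h4 : 0 ≤ (u t x) ^ (p + 1) := Real.rpow_nonneg (hU0 x hx) _
        calc a x * ((u t x) ^ (p + 1) - (u t x) ^ 2) ≤ a x * (u t x) ^ (p + 1) := h2
          _ ≤ M * C ^ (p + 1) := mul_le_mul (ha x hx).2 h3 h4 hM.le
      rw [setIntegral_const, smul_eq_mul, measureReal_def, ← hm_def] at h1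
      calc (∫ x in D, a x * ((u t x) ^ (p + 1) - (u t x) ^ 2))
          ≤ m * (M * C ^ (p + 1)) := h1
        _ = M * C ^ (p + 1) * m := by ring
    have hlamu : lam D a p u t ≤ Λ := by
      rw [hlam_split_u, hΛ_def]
      exact add_le_add (hu_h1 t ht) hAu_bd
    -- the Q bound
    have eQ : (∫ x in D, (2 * ‖gradient (u t) x‖ ^ 2 + 2 * ‖gradient (v t) x‖ ^ 2))
        = (∫ x in D, 2 * ‖gradient (u t) x‖ ^ 2)
          + ∫ x in D, 2 * ‖gradient (v t) x‖ ^ 2 :=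
      integral_add (int_gu2.const_mul 2) (int_gv2.const_mul 2)
    have eQu : (∫ x in D, 2 * ‖gradient (u t) x‖ ^ 2)
        = 2 * ∫ x in D, ‖gradient (u t) x‖ ^ 2 := integral_const_mul _ _
    have eQv : (∫ x in D, 2 * ‖gradient (v t) x‖ ^ 2)
        = 2 * ∫ x in D, ‖gradient (v t) x‖ ^ 2 := integral_const_mul _ _
    have hQbd : (∫ x in D, ‖gradient (u t) x + gradient (v t) x‖ ^ 2) ≤ 4 * C ^ 2 := by
      have h1 : (∫ x in D, ‖gradient (u t) x + gradient (v t) x‖ ^ 2)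
          ≤ ∫ x in D, (2 * ‖gradient (u t) x‖ ^ 2 + 2 * ‖gradient (v t) x‖ ^ 2) := by
        refine setIntegral_mono_on int_gs2 int_dom hD_meas fun x hx => ?_
        show ‖gradient (u t) x + gradient (v t) x‖ ^ 2
          ≤ 2 * ‖gradient (u t) x‖ ^ 2 + 2 * ‖gradient (v t) x‖ ^ 2
        have h2 := norm_add_le (gradient (u t) x) (gradient (v t) x)
        have h3 : ‖gradient (u t) x + gradient (v t) x‖ ^ 2
            ≤ (‖gradient (u t) x‖ + ‖gradient (v t) x‖) ^ 2 :=
          pow_le_pow_left₀ (norm_nonneg _) h2 2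
        have h4 := sq_nonneg (‖gradient (u t) x‖ - ‖gradient (v t) x‖)
        linarith only [h3, h4]
      rw [eQ, eQu, eQv] at h1
      linarith only [h1, hu_h1 t ht, hv_h1 t ht]
    -- square roots
    set W : ℝ := ∫ x in D, (u t x - v t x) ^ 2 with hW_def
    set N : ℝ := ∫ x in D, ‖gradient (u t) x - gradient (v t) x‖ ^ 2 with hN_def2
    set sW : ℝ := Real.sqrt W with hsW_def
    set sm : ℝ := Real.sqrt m with hsm_def
    have hsW : 0 < sW := Real.sqrt_pos.2 hWpos
    have hsm : 0 < sm := Real.sqrt_pos.2 hmpos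
    have hsW2 : sW ^ 2 = W := Real.sq_sqrt hW0'
    have hsm2 : sm ^ 2 = m := Real.sq_sqrt hm0
    have hWsq : W = sW * sW := by rw [← hsW2]; ring
    have hmsq : m = sm * sm := by rw [← hsm2]; ring
    -- ∫ |w| ≤ sW · sm
    have hI1 : (∫ x in D, |u t x - v t x|) ≤ sW * sm := by
      set s : ℝ := sW / sm with hs_def
      have hspos : 0 < s := div_pos hsW hsm
      have h1 : (∫ x in D, |u t x - v t x|)
          ≤ ∫ x in D, ((u t x - v t x) ^ 2 + s ^ 2) / (2 * s) := by
        refine setIntegral_mono_on int_absw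
          ((int_w2.add (integrableOn_const hfin.ne)).div_const _) hD_meas
          fun x hx => ?_
        show |u t x - v t x| ≤ ((u t x - v t x) ^ 2 + s ^ 2) / (2 * s)
        rw [le_div_iff₀ (by positivity)]
        have h2 := sq_nonneg (|u t x - v t x| - s)
        have h3 := sq_abs (u t x - v t x)
        nlinarith only [h2, h3]
      have e6 : (∫ x in D, ((u t x - v t x) ^ 2 + s ^ 2) / (2 * s))
          = (∫ x in D, ((u t x - v t x) ^ 2 + s ^ 2)) / (2 * s) := integral_div _ _
      have e7 : (∫ x in D, ((u t x - v t x) ^ 2 + s ^ 2))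
          = W + ∫ _x in D, s ^ 2 :=
        integral_add int_w2 (integrableOn_const hfin.ne)
      have e8 : (∫ _x in D, s ^ 2) = m * s ^ 2 := by
        rw [setIntegral_const, smul_eq_mul, measureReal_def, ← hm_def]
      rw [e6, e7, e8] at h1
      have h2 : (W + m * s ^ 2) / (2 * s) = sW * sm := by
        rw [hs_def, hWsq, hmsq]
        field_simp
        ring
      calc (∫ x in D, |u t x - v t x|) ≤ (W + m * s ^ 2) / (2 * s) := h1
        _ = sW * sm := h2
    -- |∫ w v| ≤ C · sW · sm
    have hwV_bd : |∫ x in D, (u t x - v t x) * v t x| ≤ C * (sW * sm) := by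
      have h1 : |∫ x in D, (u t x - v t x) * v t x|
          ≤ ∫ x in D, |(u t x - v t x) * v t x| := by
        have h1' := norm_integral_le_integral_norm (μ := volume.restrict D)
          (fun x => (u t x - v t x) * v t x)
        simp only [Real.norm_eq_abs] at h1'
        exact h1'
      have h2 : (∫ x in D, |(u t x - v t x) * v t x|)
          ≤ ∫ x in D, C * |u t x - v t x| := by
        refine setIntegral_mono_on int_wV.abs (int_absw.const_mul C) hD_meas fun x hx => ?_
        show |(u t x - v t x) * v t x| ≤ C * |u t x - v t x|
        rw [abs_mul]
        calc |u t x - v t x| * |v t x| ≤ |u t x - v t x| * C := by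
              refine mul_le_mul_of_nonneg_left ?_ (abs_nonneg _)
              rw [abs_of_nonneg (hV0 x hx)]; exact hVC x hx
          _ = C * |u t x - v t x| := by ring
      have e9 : (∫ x in D, C * |u t x - v t x|) = C * ∫ x in D, |u t x - v t x| :=
        integral_const_mul _ _
      rw [e9] at h2
      have h3 : C * (∫ x in D, |u t x - v t x|) ≤ C * (sW * sm) :=
        mul_le_mul_of_nonneg_left hI1 hC.le
      linarith only [h1, h2, h3]
    -- |H| bound
    have eH : (∫ x in D, (a x * ((u t x) ^ (p + 1) - (u t x) ^ 2)
          - a x * ((v t x) ^ (p + 1) - (v t x) ^ 2)))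
        = (∫ x in D, a x * ((u t x) ^ (p + 1) - (u t x) ^ 2))
          - ∫ x in D, a x * ((v t x) ^ (p + 1) - (v t x) ^ 2) :=
      integral_sub int_Au int_Av
    have hH : |(∫ x in D, a x * ((u t x) ^ (p + 1) - (u t x) ^ 2))
        - ∫ x in D, a x * ((v t x) ^ (p + 1) - (v t x) ^ 2)| ≤ K₃ * (sW * sm) := by
      rw [← eH]
      have h1 : |∫ x in D, (a x * ((u t x) ^ (p + 1) - (u t x) ^ 2)
          - a x * ((v t x) ^ (p + 1) - (v t x) ^ 2))|
          ≤ ∫ x in D, |a x * ((u t x) ^ (p + 1) - (u t x) ^ 2)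
            - a x * ((v t x) ^ (p + 1) - (v t x) ^ 2)| := by
        have h1' := norm_integral_le_integral_norm (μ := volume.restrict D)
          (fun x => a x * ((u t x) ^ (p + 1) - (u t x) ^ 2)
            - a x * ((v t x) ^ (p + 1) - (v t x) ^ 2))
        simp only [Real.norm_eq_abs] at h1'
        exact h1'
      have h2 : (∫ x in D, |a x * ((u t x) ^ (p + 1) - (u t x) ^ 2)
          - a x * ((v t x) ^ (p + 1) - (v t x) ^ 2)|)
          ≤ ∫ x in D, K₃ * |u t x - v t x| := by
        refine setIntegral_mono_on (int_Au.sub int_Av).abs (int_absw.const_mul K₃) hD_meas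
          fun x hx => ?_
        show |a x * ((u t x) ^ (p + 1) - (u t x) ^ 2)
          - a x * ((v t x) ^ (p + 1) - (v t x) ^ 2)| ≤ K₃ * |u t x - v t x|
        have hd1 : |(u t x) ^ (p + 1) - (v t x) ^ (p + 1)|
            ≤ (p + 1) * C ^ p * |u t x - v t x| := by
          have h3 := L2Aux.rpow_abs_sub_le (q := p + 1) (Cb := C) (by linarith) (hU0 x hx)
            (hUC x hx) (hV0 x hx) (hVC x hx)
          have hq : p + 1 - 1 = p := by ring
          rwa [hq] at h3
        have hd2 : |(u t x) ^ 2 - (v t x) ^ 2| ≤ 2 * C * |u t x - v t x| := by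
          have h3 : (u t x) ^ 2 - (v t x) ^ 2 = (u t x + v t x) * (u t x - v t x) := by ring
          rw [h3, abs_mul]
          have h4 : |u t x + v t x| ≤ 2 * C := by
            rw [abs_le]
            constructor
            · linarith only [hU0 x hx, hV0 x hx, hC.le]
            · linarith only [hUC x hx, hVC x hx]
          exact mul_le_mul_of_nonneg_right h4 (abs_nonneg _)
        have h5 : a x * ((u t x) ^ (p + 1) - (u t x) ^ 2)
            - a x * ((v t x) ^ (p + 1) - (v t x) ^ 2)
            = a x * (((u t x) ^ (p + 1) - (v t x) ^ (p + 1))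
              - ((u t x) ^ 2 - (v t x) ^ 2)) := by ring
        rw [h5, abs_mul, abs_of_nonneg (ha x hx).1]
        have h6 : |((u t x) ^ (p + 1) - (v t x) ^ (p + 1)) - ((u t x) ^ 2 - (v t x) ^ 2)|
            ≤ ((p + 1) * C ^ p + 2 * C) * |u t x - v t x| := by
          have h7 := abs_add_le ((u t x) ^ (p + 1) - (v t x) ^ (p + 1))
            (-((u t x) ^ 2 - (v t x) ^ 2))
          rw [abs_neg] at h7
          calc |((u t x) ^ (p + 1) - (v t x) ^ (p + 1)) - ((u t x) ^ 2 - (v t x) ^ 2)|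
              ≤ |(u t x) ^ (p + 1) - (v t x) ^ (p + 1)| + |(u t x) ^ 2 - (v t x) ^ 2| := by
                simpa [sub_eq_add_neg] using h7
            _ ≤ (p + 1) * C ^ p * |u t x - v t x| + 2 * C * |u t x - v t x| := by
                linarith only [hd1, hd2]
            _ = ((p + 1) * C ^ p + 2 * C) * |u t x - v t x| := by ring
        calc a x * |((u t x) ^ (p + 1) - (v t x) ^ (p + 1)) - ((u t x) ^ 2 - (v t x) ^ 2)|
            ≤ M * (((p + 1) * C ^ p + 2 * C) * |u t x - v t x|) :=
              mul_le_mul (ha x hx).2 h6 (abs_nonneg _) hM.le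
          _ = K₃ * |u t x - v t x| := by rw [hK3_def]; ring
      have e10 : (∫ x in D, K₃ * |u t x - v t x|) = K₃ * ∫ x in D, |u t x - v t x| :=
        integral_const_mul _ _
      rw [e10] at h2
      have h3 : K₃ * (∫ x in D, |u t x - v t x|) ≤ K₃ * (sW * sm) :=
        mul_le_mul_of_nonneg_left hI1 hK30
      linarith only [h1, h2, h3]
    -- |G| bound (with Young parameter s' = C·sW·sm)
    set s' : ℝ := C * (sW * sm) with hs'_def
    have hs'pos : 0 < s' := by rw [hs'_def]; positivity
    have eG : (∫ x in D, (‖gradient (u t) x‖ ^ 2 - ‖gradient (v t) x‖ ^ 2))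
        = (∫ x in D, ‖gradient (u t) x‖ ^ 2) - ∫ x in D, ‖gradient (v t) x‖ ^ 2 :=
      integral_sub int_gu2 int_gv2
    have hG : |(∫ x in D, ‖gradient (u t) x‖ ^ 2) - ∫ x in D, ‖gradient (v t) x‖ ^ 2|
        ≤ s' * (∫ x in D, ‖gradient (u t) x + gradient (v t) x‖ ^ 2) / 2
          + N / (2 * s') := by
      rw [← eG]
      have h1 : |∫ x in D, (‖gradient (u t) x‖ ^ 2 - ‖gradient (v t) x‖ ^ 2)|
          ≤ ∫ x in D, |‖gradient (u t) x‖ ^ 2 - ‖gradient (v t) x‖ ^ 2| := by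
        have h1' := norm_integral_le_integral_norm (μ := volume.restrict D)
          (fun x => ‖gradient (u t) x‖ ^ 2 - ‖gradient (v t) x‖ ^ 2)
        simp only [Real.norm_eq_abs] at h1'
        exact h1'
      have h2 : (∫ x in D, |‖gradient (u t) x‖ ^ 2 - ‖gradient (v t) x‖ ^ 2|)
          ≤ ∫ x in D, (s' * ‖gradient (u t) x + gradient (v t) x‖ ^ 2 / 2
            + ‖gradient (u t) x - gradient (v t) x‖ ^ 2 / (2 * s')) := by
        refine setIntegral_mono_on (int_gu2.sub int_gv2).abs
          (((int_gs2.const_mul s').div_const 2).add (int_gd2.div_const (2 * s'))) hD_meas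
          fun x hx => ?_
        show |‖gradient (u t) x‖ ^ 2 - ‖gradient (v t) x‖ ^ 2|
          ≤ s' * ‖gradient (u t) x + gradient (v t) x‖ ^ 2 / 2
            + ‖gradient (u t) x - gradient (v t) x‖ ^ 2 / (2 * s')
        have hid : ‖gradient (u t) x‖ ^ 2 - ‖gradient (v t) x‖ ^ 2
            = (inner ℝ (gradient (u t) x + gradient (v t) x)
                (gradient (u t) x - gradient (v t) x) : ℝ) := by
          rw [inner_add_left, inner_sub_right, inner_sub_right,
            real_inner_comm (gradient (v t) x) (gradient (u t) x),
            real_inner_self_eq_norm_sq, real_inner_self_eq_norm_sq]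
          ring
        rw [hid]
        have h3 := abs_real_inner_le_norm (gradient (u t) x + gradient (v t) x)
          (gradient (u t) x - gradient (v t) x)
        have h4 : ‖gradient (u t) x + gradient (v t) x‖
            * ‖gradient (u t) x - gradient (v t) x‖
            ≤ s' * ‖gradient (u t) x + gradient (v t) x‖ ^ 2 / 2
              + ‖gradient (u t) x - gradient (v t) x‖ ^ 2 / (2 * s') := by
          rw [div_add_div _ _ (two_ne_zero) (by positivity), le_div_iff₀ (by positivity)]
          have h5 := sq_nonneg (s' * ‖gradient (u t) x + gradient (v t) x‖
            - ‖gradient (u t) x - gradient (v t) x‖)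
          nlinarith only [h5]
        linarith only [h3, h4]
      have e11 : (∫ x in D, (s' * ‖gradient (u t) x + gradient (v t) x‖ ^ 2 / 2
          + ‖gradient (u t) x - gradient (v t) x‖ ^ 2 / (2 * s')))
          = (∫ x in D, s' * ‖gradient (u t) x + gradient (v t) x‖ ^ 2 / 2)
            + ∫ x in D, ‖gradient (u t) x - gradient (v t) x‖ ^ 2 / (2 * s') :=
        integral_add ((int_gs2.const_mul s').div_const 2) (int_gd2.div_const (2 * s'))
      have e12 : (∫ x in D, s' * ‖gradient (u t) x + gradient (v t) x‖ ^ 2 / 2)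
          = (∫ x in D, s' * ‖gradient (u t) x + gradient (v t) x‖ ^ 2) / 2 :=
        integral_div _ _
      have e13 : (∫ x in D, s' * ‖gradient (u t) x + gradient (v t) x‖ ^ 2)
          = s' * ∫ x in D, ‖gradient (u t) x + gradient (v t) x‖ ^ 2 :=
        integral_const_mul _ _
      have e14 : (∫ x in D, ‖gradient (u t) x - gradient (v t) x‖ ^ 2 / (2 * s'))
          = N / (2 * s') := integral_div _ _
      rw [e11, e12, e13, e14] at h2
      linarith only [h1, h2]
    -- a-part bound
    have hIa : (∫ x in D, a x * ((u t x - v t x) *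
        ((u t x - v t x) - ((u t x) ^ p - (v t x) ^ p)))) ≤ K₂ * W := by
      have h1 : (∫ x in D, a x * ((u t x - v t x) *
          ((u t x - v t x) - ((u t x) ^ p - (v t x) ^ p))))
          ≤ ∫ x in D, K₂ * (u t x - v t x) ^ 2 := by
        refine setIntegral_mono_on int_aPart (int_w2.const_mul K₂) hD_meas fun x hx => ?_
        show a x * ((u t x - v t x) * ((u t x - v t x) - ((u t x) ^ p - (v t x) ^ p)))
          ≤ K₂ * (u t x - v t x) ^ 2
        have hd : |(u t x) ^ p - (v t x) ^ p| ≤ p * C ^ (p - 1) * |u t x - v t x| :=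
          L2Aux.rpow_abs_sub_le hp.le (hU0 x hx) (hUC x hx) (hV0 x hx) (hVC x hx)
        have h2 : (u t x - v t x) * ((u t x - v t x) - ((u t x) ^ p - (v t x) ^ p))
            ≤ (1 + p * C ^ (p - 1)) * (u t x - v t x) ^ 2 := by
          have h3 : -((u t x - v t x) * ((u t x) ^ p - (v t x) ^ p))
              ≤ |u t x - v t x| * |(u t x) ^ p - (v t x) ^ p| := by
            rw [← abs_mul]
            exact neg_le_abs _
          have h5 : |u t x - v t x| * |u t x - v t x| = (u t x - v t x) ^ 2 := by
            rw [abs_mul_abs_self]; ring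
          have h4 : |u t x - v t x| * |(u t x) ^ p - (v t x) ^ p|
              ≤ p * C ^ (p - 1) * (u t x - v t x) ^ 2 := by
            calc |u t x - v t x| * |(u t x) ^ p - (v t x) ^ p|
                ≤ |u t x - v t x| * (p * C ^ (p - 1) * |u t x - v t x|) :=
                  mul_le_mul_of_nonneg_left hd (abs_nonneg _)
              _ = p * C ^ (p - 1) * (|u t x - v t x| * |u t x - v t x|) := by ring
              _ = p * C ^ (p - 1) * (u t x - v t x) ^ 2 := by rw [h5]
          nlinarith only [h3, h4]
        have h6 : 0 ≤ (1 + p * C ^ (p - 1)) * (u t x - v t x) ^ 2 := by positivity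
        calc a x * ((u t x - v t x) * ((u t x - v t x) - ((u t x) ^ p - (v t x) ^ p)))
            ≤ a x * ((1 + p * C ^ (p - 1)) * (u t x - v t x) ^ 2) :=
              mul_le_mul_of_nonneg_left h2 (ha x hx).1
          _ ≤ M * ((1 + p * C ^ (p - 1)) * (u t x - v t x) ^ 2) :=
              mul_le_mul_of_nonneg_right (ha x hx).2 h6
          _ = K₂ * (u t x - v t x) ^ 2 := by rw [hK2_def]; ring
      have e15 : (∫ x in D, K₂ * (u t x - v t x) ^ 2)
          = K₂ * ∫ x in D, (u t x - v t x) ^ 2 := integral_const_mul _ _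
      rw [e15, ← hW_def] at h1
      exact h1
    -- assemble
    have hlamdiff : lam D a p u t - lam D a p v t
        = ((∫ x in D, ‖gradient (u t) x‖ ^ 2) - ∫ x in D, ‖gradient (v t) x‖ ^ 2)
          + ((∫ x in D, a x * ((u t x) ^ (p + 1) - (u t x) ^ 2))
            - ∫ x in D, a x * ((v t x) ^ (p + 1) - (v t x) ^ 2)) := by
      rw [hlam_split_u, hlam_split_v]; ring
    have hT : (lam D a p u t - lam D a p v t) * (∫ x in D, (u t x - v t x) * v t x)
        ≤ N / 2 + (2 * C ^ 4 * m + K₃ * C * m) * W := by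
      have habs : |(lam D a p u t - lam D a p v t) * (∫ x in D, (u t x - v t x) * v t x)|
          ≤ (|(∫ x in D, ‖gradient (u t) x‖ ^ 2) - ∫ x in D, ‖gradient (v t) x‖ ^ 2|
            + |(∫ x in D, a x * ((u t x) ^ (p + 1) - (u t x) ^ 2))
              - ∫ x in D, a x * ((v t x) ^ (p + 1) - (v t x) ^ 2)|) * (C * (sW * sm)) := by
        rw [abs_mul]
        refine mul_le_mul ?_ hwV_bd (abs_nonneg _) (by positivity)
        rw [hlamdiff]
        exact abs_add_le _ _
      have hstep : (|(∫ x in D, ‖gradient (u t) x‖ ^ 2) - ∫ x in D, ‖gradient (v t) x‖ ^ 2|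
            + |(∫ x in D, a x * ((u t x) ^ (p + 1) - (u t x) ^ 2))
              - ∫ x in D, a x * ((v t x) ^ (p + 1) - (v t x) ^ 2)|) * (C * (sW * sm))
          ≤ ((s' * (∫ x in D, ‖gradient (u t) x + gradient (v t) x‖ ^ 2) / 2 + N / (2 * s'))
            + K₃ * (sW * sm)) * (C * (sW * sm)) :=
        mul_le_mul_of_nonneg_right (add_le_add hG hH) (by positivity)
      have hval : ((s' * (∫ x in D, ‖gradient (u t) x + gradient (v t) x‖ ^ 2) / 2
            + N / (2 * s')) + K₃ * (sW * sm)) * (C * (sW * sm))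
          = C ^ 2 * (W * m) * (∫ x in D, ‖gradient (u t) x + gradient (v t) x‖ ^ 2) / 2
            + N / 2 + K₃ * C * (W * m) := by
        rw [hs'_def, hWsq, hmsq]
        have hsWne : sW ≠ 0 := ne_of_gt hsW
        have hsmne : sm ≠ 0 := ne_of_gt hsm
        field_simp
      have hfin2 : C ^ 2 * (W * m)
            * (∫ x in D, ‖gradient (u t) x + gradient (v t) x‖ ^ 2) / 2
          ≤ 2 * C ^ 4 * m * W := by
        have h0 : 0 ≤ C ^ 2 * (W * m) := by positivity
        linarith only [mul_le_mul_of_nonneg_left hQbd h0]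
      calc (lam D a p u t - lam D a p v t) * (∫ x in D, (u t x - v t x) * v t x)
          ≤ |(lam D a p u t - lam D a p v t) * (∫ x in D, (u t x - v t x) * v t x)| :=
            le_abs_self _
        _ ≤ ((s' * (∫ x in D, ‖gradient (u t) x + gradient (v t) x‖ ^ 2) / 2 + N / (2 * s'))
            + K₃ * (sW * sm)) * (C * (sW * sm)) := le_trans habs hstep
        _ = C ^ 2 * (W * m) * (∫ x in D, ‖gradient (u t) x + gradient (v t) x‖ ^ 2) / 2
            + N / 2 + K₃ * C * (W * m) := hval
        _ ≤ 2 * C ^ 4 * m * W + N / 2 + K₃ * C * (W * m) := by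
            linarith only [hfin2]
        _ ≤ N / 2 + (2 * C ^ 4 * m + K₃ * C * m) * W := le_of_eq (by ring)
    -- final combination
    have hsplit2 : lam D a p u t * (∫ x in D, (u t x - v t x) * u t x)
        - lam D a p v t * (∫ x in D, (u t x - v t x) * v t x)
        = lam D a p u t * W
          + (lam D a p u t - lam D a p v t) * (∫ x in D, (u t x - v t x) * v t x) := by
      have h1 : (∫ x in D, (u t x - v t x) * u t x)
          = W + ∫ x in D, (u t x - v t x) * v t x := by
        linarith only [hWsplit]
      rw [h1]; ring
    have hlamuW : lam D a p u t * W ≤ Λ * W :=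
      mul_le_mul_of_nonneg_right hlamu hW0'
    have hfinal : (∫ x in D, (u t x - v t x) *
        (deriv (fun s => u s x) t - deriv (fun s => v s x) t)) ≤ K * W := by
      rw [he, hsplit2, hK_def]
      linarith only [hN0, hT, hIa, hlamuW]
    linarith only [hfinal]
  -- Grönwall-type wrapper
  refine ⟨2 * K, by linarith only [hK0], fun t ht => ?_⟩
  have hE0 : (∫ x in D, (u 0 x - v 0 x) ^ 2) = ∫ x in D, (gu x - gv x) ^ 2 :=
    setIntegral_congr_fun hD_meas fun x hx => by
      show (u 0 x - v 0 x) ^ 2 = (gu x - gv x) ^ 2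
      rw [hu.init x hx, hv.init x hx]
  have hanti : AntitoneOn (fun s => (∫ x in D, (u s x - v s x) ^ 2)
      * Real.exp (-(2 * K) * s)) (Ici (0:ℝ)) := by
    apply antitoneOn_of_deriv_nonpos (convex_Ici 0)
    · intro r hr
      exact ((hw_deriv r hr).mul
        (((hasDerivAt_id r).const_mul (-(2 * K))).exp)).continuousAt.continuousWithinAt
    · intro r hr
      rw [interior_Ici] at hr
      exact ((hw_deriv r hr.le).mul
        (((hasDerivAt_id r).const_mul (-(2 * K))).exp)).differentiableAt.differentiableWithinAt
    · intro r hr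
      rw [interior_Ici] at hr
      have hd := (hw_deriv r hr.le).mul (((hasDerivAt_id r).const_mul (-(2 * K))).exp)
      have hdv : deriv (fun s => (∫ x in D, (u s x - v s x) ^ 2)
          * Real.exp (-(2 * K) * s)) r
          = (2 * ∫ x in D, (u r x - v r x) *
              (deriv (fun s => u s x) r - deriv (fun s => v s x) r))
            * Real.exp (-(2 * K) * r)
            + (∫ x in D, (u r x - v r x) ^ 2)
              * (Real.exp (-(2 * K) * r) * (-(2 * K) * 1)) := hd.deriv
      rw [hdv]
      have hkey := key r hr.le
      have hE' : 0 ≤ ∫ x in D, (u r x - v r x) ^ 2 :=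
        setIntegral_nonneg hD_meas fun x _ => sq_nonneg _
      have hexp : 0 < Real.exp (-(2 * K) * r) := Real.exp_pos _
      have h1 := mul_le_mul_of_nonneg_right hkey hexp.le
      have h2 : (∫ x in D, (u r x - v r x) ^ 2) * (Real.exp (-(2 * K) * r) * (-(2 * K) * 1))
          = -(2 * K * (∫ x in D, (u r x - v r x) ^ 2) * Real.exp (-(2 * K) * r)) := by ring
      rw [h2]
      linarith only [h1]
  have h1 := hanti (self_mem_Ici (a := (0:ℝ))) (mem_Ici.2 ht) ht
  have h1' : (∫ x in D, (u t x - v t x) ^ 2) * Real.exp (-(2 * K) * t)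
      ≤ ∫ x in D, (gu x - gv x) ^ 2 := by
    rw [← hE0]
    calc (∫ x in D, (u t x - v t x) ^ 2) * Real.exp (-(2 * K) * t)
        ≤ (∫ x in D, (u 0 x - v 0 x) ^ 2) * Real.exp (-(2 * K) * 0) := h1
      _ = ∫ x in D, (u 0 x - v 0 x) ^ 2 := by simp
  have hexp1 : Real.exp (-(2 * K) * t) * Real.exp (2 * K * t) = 1 := by
    have h2 : -(2 * K) * t + 2 * K * t = 0 := by ring
    rw [← Real.exp_add, h2, Real.exp_zero]
  calc (∫ x in D, (u t x - v t x) ^ 2)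
      = ((∫ x in D, (u t x - v t x) ^ 2) * Real.exp (-(2 * K) * t))
        * Real.exp (2 * K * t) := by
        rw [mul_assoc, hexp1, mul_one]
    _ ≤ (∫ x in D, (gu x - gv x) ^ 2) * Real.exp (2 * K * t) :=
        mul_le_mul_of_nonneg_right h1' (Real.exp_pos _).le
end
end

section
/- (Uniform bound for the iteration scheme, establishing estimate (2.9) of the paper.) Let A ≥ 0 and c > 0 be real numbers, and let (y_k)_{k∈ℕ} be a sequence of continuous functions y_k : [0,∞) → [0,∞) such that y_0(t) ≤ A for all t ≥ 0, and for every k ∈ ℕ and every t ≥ 0: y_{k+1}(t) ≤ A·exp(c·∫_0^t (y_k(s) + c) ds). Then, setting c₄ = e·A and δ = 1/(c·(e·A + c)), one has y_k(t) ≤ c₄ for every k ∈ ℕ and every t ∈ [0, δ]. -/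
open MeasureTheory Real Set

/-- Uniform bound for the iteration scheme, establishing
estimate (2.9) of the paper. -/
theorem iteration_uniform_bound (A c : ℝ) (hA : 0 ≤ A) (hc : 0 < c)
    (y : ℕ → ℝ → ℝ)
    (hy_cont : ∀ k, ContinuousOn (y k) (Set.Ici 0))
    (hy_nonneg : ∀ k, ∀ t, 0 ≤ t → 0 ≤ y k t)
    (hy0 : ∀ t, 0 ≤ t → y 0 t ≤ A)
    (hrec : ∀ k, ∀ t, 0 ≤ t →
      y (k + 1) t ≤ A * Real.exp (c * ∫ s in (0:ℝ)..t, (y k s + c))) :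
    ∀ k, ∀ t ∈ Set.Icc (0:ℝ) (1 / (c * (Real.exp 1 * A + c))),
      y k t ≤ Real.exp 1 * A := by
  have hE1 : (1:ℝ) ≤ Real.exp 1 := by
    have := Real.add_one_le_exp (1:ℝ); linarith
  have hEc : 0 < Real.exp 1 * A + c := by positivity
  intro k
  induction k with
  | zero =>
    intro t ht
    exact (hy0 t ht.1).trans (le_mul_of_one_le_left hA hE1)
  | succ k ih =>
    intro t ht
    obtain ⟨ht0, htδ⟩ := ht
    have hint : ∫ s in (0:ℝ)..t, (y k s + c) ≤ (Real.exp 1 * A + c) * t := by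
      have hi1 : IntervalIntegrable (fun s => y k s + c) volume 0 t := by
        apply ContinuousOn.intervalIntegrable
        rw [Set.uIcc_of_le ht0]
        exact (((hy_cont k).mono (fun x hx => hx.1)).add continuousOn_const)
      have hi2 : IntervalIntegrable (fun _ : ℝ => Real.exp 1 * A + c) volume 0 t :=
        intervalIntegrable_const
      have := intervalIntegral.integral_mono_on ht0 hi1 hi2
        (fun s hs => add_le_add_left (ih s ⟨hs.1, hs.2.trans htδ⟩) c)
      have hconst : ∫ (_ : ℝ) in (0:ℝ)..t, (Real.exp 1 * A + c) = (Real.exp 1 * A + c) * t := by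
        simp [mul_comm]
        ring
      exact this.trans_eq hconst
    have harg : c * ∫ s in (0:ℝ)..t, (y k s + c) ≤ 1 := by
      have h2 : (Real.exp 1 * A + c) * t ≤ (Real.exp 1 * A + c) * (1 / (c * (Real.exp 1 * A + c))) :=
        mul_le_mul_of_nonneg_left htδ hEc.le
      have h3 : (Real.exp 1 * A + c) * (1 / (c * (Real.exp 1 * A + c))) = 1 / c := by
        field_simp
      have := (hint.trans h2).trans_eq h3
      calc c * ∫ s in (0:ℝ)..t, (y k s + c) ≤ c * (1 / c) :=
            mul_le_mul_of_nonneg_left this hc.le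
        _ = 1 := by field_simp
    calc y (k + 1) t ≤ A * Real.exp (c * ∫ s in (0:ℝ)..t, (y k s + c)) := hrec k t ht0
      _ ≤ A * Real.exp 1 := by
          exact mul_le_mul_of_nonneg_left (Real.exp_le_exp.mpr harg) hA
      _ = Real.exp 1 * A := mul_comm _ _
end
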